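/- arXiv:2205.02276 — 4 statements merged into one kernel-verified Lean document; each statement's English description precedes it below -/
import Mathlib

section
/- For any graph G on n ≥ 2 vertices and any vertex v, the least signless Laplacian eigenvalue of G − v is at least the least signless Laplacian eigenvalue of G minus 1: q_min(G) − 1 ≤ q_min(G − v). -/
open scoped Classical
open Matrix

/-- The signless Laplacian matrix `Q = D + A` of a graph. -/
noncomputable def qMatrix {V : Type*} [Fintype V] (G : SimpleGraph V) : Matrix V V ℝ :=
  Matrix.diagonal (fun v => (G.degree v : ℝ)) + G.adjMatrix ℝ

lemma inf_eig_le_rayleigh {m : Type*} [Fintype m] [DecidableEq m] [Nonempty m]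
    {A : Matrix m m ℝ} (hA : A.IsHermitian) (x : m → ℝ) :
    (⨅ i, hA.eigenvalues i) * (x ⬝ᵥ x) ≤ x ⬝ᵥ (A *ᵥ x) := by
  set U : Matrix m m ℝ := (hA.eigenvectorUnitary : Matrix m m ℝ) with hU
  have hstar : star U = Uᵀ := by
    ext i j; simp [Matrix.star_eq_conjTranspose, Matrix.conjTranspose_apply]
  set y : m → ℝ := Uᵀ *ᵥ x with hy
  have hy2 : y = x ᵥ* U := by rw [hy, Matrix.mulVec_transpose]
  have hUU : U * Uᵀ = 1 := by
    have := (Matrix.mem_unitaryGroup_iff).mp hA.eigenvectorUnitary.2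
    rwa [← hU, hstar] at this
  have h2 : x ⬝ᵥ x = y ⬝ᵥ y := by
    calc x ⬝ᵥ x = x ⬝ᵥ ((U * Uᵀ) *ᵥ x) := by rw [hUU, Matrix.one_mulVec]
      _ = x ⬝ᵥ (U *ᵥ (Uᵀ *ᵥ x)) := by rw [Matrix.mulVec_mulVec]
      _ = (x ᵥ* U) ⬝ᵥ (Uᵀ *ᵥ x) := Matrix.dotProduct_mulVec _ _ _
      _ = y ⬝ᵥ y := by rw [← hy2, hy]
  have h1 : x ⬝ᵥ (A *ᵥ x) = ∑ i, hA.eigenvalues i * (y i * y i) := by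
    conv_lhs => rw [hA.spectral_theorem, Unitary.conjStarAlgAut_apply]
    rw [Matrix.mul_assoc, ← Matrix.mulVec_mulVec, ← Matrix.mulVec_mulVec,
      Matrix.dotProduct_mulVec, ← hU, hstar, Matrix.mulVec_transpose, ← hy2]
    simp [dotProduct, Matrix.mulVec_diagonal]
    exact Finset.sum_congr rfl fun i _ => by ring
  rw [h1, h2, dotProduct, Finset.mul_sum]
  exact Finset.sum_le_sum fun i _ =>
    mul_le_mul_of_nonneg_right (ciInf_le (Finite.bddBelow_range _) i) (mul_self_nonneg _)

lemma eigvec_unit {m : Type*} [Fintype m] [DecidableEq m] {A : Matrix m m ℝ}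
    (hA : A.IsHermitian) (i : m) :
    ⇑(hA.eigenvectorBasis i) ⬝ᵥ ⇑(hA.eigenvectorBasis i) = 1 := by
  have h := hA.eigenvectorBasis.orthonormal.1 i
  have h2 : (inner ℝ (hA.eigenvectorBasis i) (hA.eigenvectorBasis i) : ℝ) = 1 := by
    rw [real_inner_self_eq_norm_mul_norm, h]; ring
  rw [← h2]
  simp [dotProduct, PiLp.inner_apply, mul_comm]
  rw [PiLp.inner_apply] at h2
  rw [← h2]
  exact Finset.sum_congr rfl fun j _ => by simp [sq]

lemma sum_split {n : ℕ} (v : Fin n) (f : Fin n → ℝ) :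
    ∑ w, f w = f v + ∑ w : {w : Fin n | w ≠ v}, f ↑w := by
  rw [← Finset.sum_compl_add_sum {v} f, Finset.sum_singleton, add_comm]
  congr 1
  exact (Finset.sum_subtype {v}ᶜ (by simp [Set.mem_setOf_eq]) f)

lemma deg_real {V : Type*} [Fintype V] [DecidableEq V] (G : SimpleGraph V) (w : V) :
    (G.degree w : ℝ) = ∑ w', G.adjMatrix ℝ w w' := by
  rw [SimpleGraph.degree, SimpleGraph.neighborFinset_eq_filter]
  simp [SimpleGraph.adjMatrix_apply, Finset.sum_boole]
theorem qmin_vertex_deleted {n : ℕ} (hn : 2 ≤ n) (G : SimpleGraph (Fin n)) (v : Fin n)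
    (hQ : (qMatrix G).IsHermitian)
    (hQv : (qMatrix (G.induce {w | w ≠ v})).IsHermitian) :
    (⨅ i, hQ.eigenvalues i) - 1 ≤ ⨅ i, hQv.eigenvalues i := by
  haveI hne : Nonempty ↥{w : Fin n | w ≠ v} := by
    obtain ⟨w, hw⟩ := Fintype.exists_ne_of_one_lt_card (by simp; omega) v
    exact ⟨⟨w, hw⟩⟩
  haveI : Nonempty (Fin n) := ⟨v⟩
  obtain ⟨i₀, hi₀⟩ := Finite.exists_min hQv.eigenvalues
  have hinf : ⨅ i, hQv.eigenvalues i = hQv.eigenvalues i₀ :=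
    le_antisymm (ciInf_le (Finite.bddBelow_range _) i₀) (le_ciInf hi₀)
  set lam := hQv.eigenvalues i₀ with hlam
  set u : ↥{w : Fin n | w ≠ v} → ℝ := ⇑(hQv.eigenvectorBasis i₀) with hu
  have hQu : qMatrix (G.induce {w | w ≠ v}) *ᵥ u = lam • u := hQv.mulVec_eigenvectorBasis i₀
  have hu1 : u ⬝ᵥ u = 1 := eigvec_unit hQv i₀
  have hu1' : ∑ w : ↥{w : Fin n | w ≠ v}, u w * u w = 1 := hu1
  set x : Fin n → ℝ := fun w => if h : w ≠ v then u ⟨w, h⟩ else 0 with hxdef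
  have hxv : x v = 0 := by simp [hxdef]
  have hxw : ∀ w : ↥{w : Fin n | w ≠ v}, x ↑w = u w := by
    intro w
    have hw : (w : Fin n) ≠ v := w.2
    simp only [hxdef, dif_pos hw]
  have hxx : x ⬝ᵥ x = 1 := by
    rw [dotProduct, sum_split v (fun w => x w * x w), hxv, mul_zero, zero_add]
    simp only [hxw]
    exact hu1'
  have hadjH : ∀ (w w' : ↥{w : Fin n | w ≠ v}),
      (G.induce {w | w ≠ v}).adjMatrix ℝ w w' = G.adjMatrix ℝ ↑w ↑w' := by
    intro w w'
    simp [SimpleGraph.adjMatrix_apply, SimpleGraph.comap_adj, SimpleGraph.induce]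
    exact if_congr Iff.rfl rfl rfl
  have hdeg : ∀ w : ↥{w : Fin n | w ≠ v},
      (G.degree ↑w : ℝ) = ((G.induce {w | w ≠ v}).degree w : ℝ) + G.adjMatrix ℝ ↑w v := by
    intro w
    erw [deg_real, deg_real, sum_split v (fun w' => G.adjMatrix ℝ ↑w w')]
    have hs : ∑ w' : ↥{w : Fin n | w ≠ v}, G.adjMatrix ℝ ↑w ↑w'
        = ∑ w', (G.induce {w | w ≠ v}).adjMatrix ℝ w w' :=
      Finset.sum_congr rfl fun w' _ => (hadjH w w').symm
    rw [hs, add_comm]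
    rfl
  have hQform : ∀ {V : Type} [Fintype V] [DecidableEq V] (H : SimpleGraph V) (z : V → ℝ) (w : V),
      (qMatrix H *ᵥ z) w = (H.degree w : ℝ) * z w + ∑ w', H.adjMatrix ℝ w w' * z w' := by
    intro V _ _ H z w
    simp only [qMatrix, Matrix.add_mulVec, Matrix.mulVec_diagonal, Pi.add_apply]
    congr 1
  have hQx : ∀ w : ↥{w : Fin n | w ≠ v},
      (qMatrix G *ᵥ x) ↑w = lam * u w + G.adjMatrix ℝ ↑w v * u w := by
    intro w
    have h4 : (qMatrix (G.induce {w | w ≠ v}) *ᵥ u) w = lam * u w := by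
      rw [hQu]; simp
    have h5 : ((G.induce {w | w ≠ v}).degree w : ℝ) * u w
        + ∑ w', (G.induce {w | w ≠ v}).adjMatrix ℝ w w' * u w' = lam * u w := by
      erw [← hQform, h4]
    rw [hQform, sum_split v (fun w' => G.adjMatrix ℝ ↑w w' * x w'), hxv, mul_zero, zero_add,
      hxw, hdeg w]
    have h2 : ∑ w' : ↥{w : Fin n | w ≠ v}, G.adjMatrix ℝ ↑w ↑w' * x ↑w'
        = ∑ w', (G.induce {w | w ≠ v}).adjMatrix ℝ w w' * u w' := by
      exact Finset.sum_congr rfl fun w' _ => by rw [hadjH, hxw]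
    rw [h2]
    linear_combination h5
  have key : x ⬝ᵥ (qMatrix G *ᵥ x)
      = lam + ∑ w : ↥{w : Fin n | w ≠ v}, G.adjMatrix ℝ ↑w v * (u w * u w) := by
    rw [dotProduct, sum_split v (fun w => x w * (qMatrix G *ᵥ x) w), hxv, zero_mul,
      zero_add]
    have h6 : ∀ w : ↥{w : Fin n | w ≠ v}, x ↑w * (qMatrix G *ᵥ x) ↑w
        = lam * (u w * u w) + G.adjMatrix ℝ ↑w v * (u w * u w) := by
      intro w; rw [hxw, hQx]; ring
    rw [Finset.sum_congr rfl fun w _ => h6 w, Finset.sum_add_distrib, ← Finset.mul_sum, hu1',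
      mul_one]
  have hb : ∑ w : ↥{w : Fin n | w ≠ v}, G.adjMatrix ℝ ↑w v * (u w * u w) ≤ 1 := by
    calc ∑ w : ↥{w : Fin n | w ≠ v}, G.adjMatrix ℝ ↑w v * (u w * u w)
        ≤ ∑ w : ↥{w : Fin n | w ≠ v}, u w * u w := by
          refine Finset.sum_le_sum fun i _ => ?_
          have h0 : (0:ℝ) ≤ G.adjMatrix ℝ ↑i v := by
            simp only [SimpleGraph.adjMatrix_apply]; positivity
          have h1 : G.adjMatrix ℝ ↑i v ≤ 1 := by
            simp only [SimpleGraph.adjMatrix_apply]; split <;> norm_num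
          nlinarith [mul_self_nonneg (u i)]
      _ = 1 := hu1'
  have hray := inf_eig_le_rayleigh hQ x
  rw [hxx, mul_one, key] at hray
  rw [hinf]
  linarith
end

section
/- Let G be a graph in which d_u + d_v ≥ 6 for every edge uv. Then every negative adjacency eigenvalue of the second iterated line graph L²(G) equals −2, and the energy of L²(G) equals 4(n_2 − n_1), where n_1 and n_2 are the numbers of vertices of L(G) and L²(G) respectively. -/
open scoped Classical

namespace IterAux

open Matrix Finset

variable {W : Type*} [Fintype W] [DecidableEq W]

noncomputable def inc (H : SimpleGraph W) : Matrix W H.edgeSet ℝ :=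
  Matrix.of fun w e => if w ∈ (e : Sym2 W) then 1 else 0

lemma sum_ind_mul_ind {ι : Type*} [Fintype ι] (p q : ι → Prop) [DecidablePred p]
    [DecidablePred q] :
    ∑ w, (if p w then (1:ℝ) else 0) * (if q w then 1 else 0)
      = ((univ.filter fun w => p w ∧ q w).card : ℝ) := by
  rw [← Finset.sum_boole]
  refine Finset.sum_congr rfl fun w _ => ?_
  by_cases h1 : p w <;> by_cases h2 : q w <;> simp [h1, h2]

lemma card_filter_mem {z : Sym2 W} (hz : ¬ z.IsDiag) :
    (univ.filter fun w => w ∈ z ∧ w ∈ z).card = 2 := by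
  induction z using Sym2.ind with
  | _ a b =>
    rw [Sym2.mk_isDiag_iff] at hz
    have h : (univ.filter fun w => w ∈ (s(a,b) : Sym2 W) ∧ w ∈ (s(a,b) : Sym2 W)) = {a, b} := by
      ext w; simp [Sym2.mem_iff]
    rw [h, card_pair hz]

lemma filter_mem_inter {e f : Sym2 W} (hef : e ≠ f) {v : W} (hv : v ∈ e) (hvf : v ∈ f) :
    (univ.filter fun w => w ∈ e ∧ w ∈ f) = {v} := by
  ext w
  simp only [mem_filter, mem_univ, true_and, mem_singleton]
  constructor
  · rintro ⟨hw, hwf⟩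
    by_contra hne
    exact hef (Sym2.eq_of_ne_mem hne hw hv hwf hvf)
  · rintro rfl; exact ⟨hv, hvf⟩

lemma transpose_inc_mul_inc (H : SimpleGraph W) :
    (inc H)ᵀ * inc H = H.lineGraph.adjMatrix ℝ + (2:ℝ) • 1 := by
  ext e f
  rw [Matrix.mul_apply]
  simp only [transpose_apply, inc, of_apply]
  rw [sum_ind_mul_ind]
  by_cases hef : e = f
  · subst hef
    rw [card_filter_mem (SimpleGraph.not_isDiag_of_mem_edgeSet _ e.2)]
    simp [SimpleGraph.adjMatrix_apply, Matrix.one_apply]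
  · by_cases hshare : ∃ v, v ∈ (e : Sym2 W) ∧ v ∈ (f : Sym2 W)
    · obtain ⟨v, hv, hvf⟩ := hshare
      have hne : (e : Sym2 W) ≠ f := fun h => hef (Subtype.ext h)
      rw [filter_mem_inter hne hv hvf, card_singleton]
      have hadj : H.lineGraph.Adj e f :=
        SimpleGraph.lineGraph_adj_iff_exists.mpr ⟨hef, v, hv, hvf⟩
      simp [SimpleGraph.adjMatrix_apply, hadj, Matrix.one_apply, hef]
    · have h0 : (univ.filter fun w => w ∈ (e : Sym2 W) ∧ w ∈ (f : Sym2 W)) = ∅ := by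
        ext w; simp only [mem_filter, mem_univ, true_and, Finset.notMem_empty, iff_false]
        intro hw; exact hshare ⟨w, hw⟩
      rw [h0]
      have hnadj : ¬ H.lineGraph.Adj e f := fun h => by
        obtain ⟨_, v, hv, hvf⟩ := SimpleGraph.lineGraph_adj_iff_exists.mp h
        exact hshare ⟨v, hv, hvf⟩
      simp [SimpleGraph.adjMatrix_apply, hnadj, Matrix.one_apply, hef]

lemma inc_mul_transpose (H : SimpleGraph W) [DecidableRel H.Adj] :
    inc H * (inc H)ᵀ = Matrix.diagonal (fun w => (H.degree w : ℝ)) + H.adjMatrix ℝ := by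
  ext u v
  rw [Matrix.mul_apply]
  simp only [transpose_apply, inc, of_apply]
  rw [sum_ind_mul_ind]
  by_cases huv : u = v
  · subst huv
    have h1 : (univ.filter fun e : H.edgeSet => u ∈ (e : Sym2 W) ∧ u ∈ (e : Sym2 W))
        = univ.filter fun e : H.edgeSet => u ∈ (e : Sym2 W) := by
      apply Finset.filter_congr; intro e _; tauto
    have h2 : (univ.filter fun e : H.edgeSet => u ∈ (e : Sym2 W)).card = H.degree u := by
      rw [← Fintype.card_subtype, ← SimpleGraph.card_incidenceSet_eq_degree]
      apply Fintype.card_congr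
      exact ⟨fun x => ⟨x.1.1, x.1.2, x.2⟩, fun y => ⟨⟨y.1, y.2.1⟩, y.2.2⟩,
        fun _ => rfl, fun _ => rfl⟩
    rw [h1, h2]
    simp [Matrix.diagonal_apply, SimpleGraph.adjMatrix_apply]
  · by_cases hadj : H.Adj u v
    · have h1 : (univ.filter fun e : H.edgeSet => u ∈ (e : Sym2 W) ∧ v ∈ (e : Sym2 W))
          = {(⟨s(u,v), (SimpleGraph.mem_edgeSet H).mpr hadj⟩ : H.edgeSet)} := by
        ext e
        simp only [mem_filter, mem_univ, true_and, mem_singleton]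
        rw [← Subtype.coe_inj]
        exact Sym2.mem_and_mem_iff huv
      rw [h1, card_singleton]
      simp [Matrix.diagonal_apply, SimpleGraph.adjMatrix_apply, huv, hadj]
    · have h1 : (univ.filter fun e : H.edgeSet => u ∈ (e : Sym2 W) ∧ v ∈ (e : Sym2 W)) = ∅ := by
        ext e
        simp only [mem_filter, mem_univ, true_and, Finset.notMem_empty, iff_false]
        intro he
        have h2 : (e : Sym2 W) = s(u,v) := (Sym2.mem_and_mem_iff huv).mp he
        exact hadj ((SimpleGraph.mem_edgeSet H).mp (h2 ▸ e.2))
      rw [h1]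
      simp [Matrix.diagonal_apply, SimpleGraph.adjMatrix_apply, huv, hadj]

lemma sym2_exists_rep {α : Type*} (z : Sym2 α) : ∃ a b, z = s(a,b) := by
  induction z using Sym2.ind with
  | _ a b => exact ⟨a, b, rfl⟩

lemma four_le_lineGraph_degree {V : Type*} [Fintype V] [DecidableEq V] (G : SimpleGraph V)
    [DecidableRel G.Adj]
    (hdeg : ∀ u v, G.Adj u v → 6 ≤ G.degree u + G.degree v)
    (e : G.edgeSet) : 4 ≤ (G.lineGraph).degree e := by
  obtain ⟨u, v, huv⟩ := sym2_exists_rep (e : Sym2 V)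
  have hadj : G.Adj u v := (SimpleGraph.mem_edgeSet G).mp (huv ▸ e.2)
  have hne : u ≠ v := G.ne_of_adj hadj
  set S : Finset (Sym2 V) := (G.incidenceFinset u ∪ G.incidenceFinset v).erase s(u,v) with hS
  have hint : (G.incidenceFinset u ∩ G.incidenceFinset v) ⊆ {s(u,v)} := by
    intro f hf
    rw [Finset.mem_inter, SimpleGraph.mem_incidenceFinset, SimpleGraph.mem_incidenceFinset] at hf
    obtain ⟨⟨_, hfu⟩, ⟨_, hfv⟩⟩ := hf
    rw [Finset.mem_singleton]
    exact (Sym2.mem_and_mem_iff hne).mp ⟨hfu, hfv⟩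
  have h1 : (G.incidenceFinset u ∩ G.incidenceFinset v).card ≤ 1 :=
    le_trans (Finset.card_le_card hint) (by simp)
  have h2 := Finset.card_union_add_card_inter (G.incidenceFinset u) (G.incidenceFinset v)
  rw [G.card_incidenceFinset_eq_degree, G.card_incidenceFinset_eq_degree] at h2
  have h6 := hdeg u v hadj
  have hmem : s(u,v) ∈ G.incidenceFinset u ∪ G.incidenceFinset v := by
    apply Finset.mem_union_left
    rw [SimpleGraph.mem_incidenceFinset, SimpleGraph.mem_incidenceSet]
    exact hadj
  have hScard : 4 ≤ S.card := by
    rw [hS, Finset.card_erase_of_mem hmem]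
    omega
  have hinj : S.card ≤ ((G.lineGraph).neighborFinset e).card := by
    apply Finset.card_le_card_of_injOn
      (fun f => if hf : f ∈ G.edgeSet then (⟨f, hf⟩ : G.edgeSet) else e)
    · intro f hf
      obtain ⟨hfne, hfun⟩ := Finset.mem_erase.mp hf
      have hfe : f ∈ G.edgeSet := by
        rcases Finset.mem_union.mp hfun with h | h <;>
          exact ((SimpleGraph.mem_incidenceFinset _ _ _).mp h).1
      beta_reduce; rw [dif_pos hfe, Finset.mem_coe, SimpleGraph.mem_neighborFinset]
      rw [SimpleGraph.lineGraph_adj_iff_exists]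
      refine ⟨?_, ?_⟩
      · intro hcontra
        apply hfne
        have := congrArg Subtype.val hcontra
        simp only at this
        rw [← this, huv]
      · rcases Finset.mem_union.mp hfun with h | h
        · exact ⟨u, by rw [huv]; simp, ((SimpleGraph.mem_incidenceFinset _ _ _).mp h).2⟩
        · exact ⟨v, by rw [huv]; simp, ((SimpleGraph.mem_incidenceFinset _ _ _).mp h).2⟩
    · intro f1 h1' f2 h2' heq
      have hf1 : f1 ∈ G.edgeSet := by
        rcases Finset.mem_union.mp (Finset.mem_erase.mp h1').2 with h | h <;>
          exact ((SimpleGraph.mem_incidenceFinset _ _ _).mp h).1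
      have hf2 : f2 ∈ G.edgeSet := by
        rcases Finset.mem_union.mp (Finset.mem_erase.mp h2').2 with h | h <;>
          exact ((SimpleGraph.mem_incidenceFinset _ _ _).mp h).1
      simp only at heq
      rw [dif_pos hf1, dif_pos hf2] at heq
      exact congrArg Subtype.val heq
  exact le_trans hScard hinj

lemma conjT_eq_transpose {m n : Type*} (A : Matrix m n ℝ) : Aᴴ = Aᵀ := by
  ext i j; simp [Matrix.conjTranspose_apply]

lemma rank_unitary_conj {n : Type*} [Fintype n] [DecidableEq n]
    (U : Matrix.unitaryGroup n ℝ) (X : Matrix n n ℝ) :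
    ((U : Matrix n n ℝ) * X * star (U : Matrix n n ℝ)).rank = X.rank := by
  have h1 : star (U : Matrix n n ℝ) * U = 1 := Matrix.mem_unitaryGroup_iff'.mp U.2
  apply le_antisymm
  · exact le_trans (Matrix.rank_mul_le_left _ _) (Matrix.rank_mul_le_right _ _)
  · have hX : star (U : Matrix n n ℝ) * ((U : Matrix n n ℝ) * X * star (U : Matrix n n ℝ))
        * (U : Matrix n n ℝ) = X := by
      calc star (U : Matrix n n ℝ) * ((U : Matrix n n ℝ) * X * star (U : Matrix n n ℝ))
            * (U : Matrix n n ℝ)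
          = (star (U : Matrix n n ℝ) * (U : Matrix n n ℝ)) * X
            * (star (U : Matrix n n ℝ) * (U : Matrix n n ℝ)) := by
            simp only [Matrix.mul_assoc]
        _ = X := by rw [h1, one_mul, mul_one]
    have hle : (star (U : Matrix n n ℝ) * ((U : Matrix n n ℝ) * X * star (U : Matrix n n ℝ))
        * (U : Matrix n n ℝ)).rank ≤ ((U : Matrix n n ℝ) * X * star (U : Matrix n n ℝ)).rank :=
      le_trans (Matrix.rank_mul_le_left _ _) (Matrix.rank_mul_le_right _ _)
    rwa [hX] at hle

lemma diag_real (n : Type*) [Fintype n] [DecidableEq n] (w : n → ℝ) :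
    Matrix.diagonal ((RCLike.ofReal : ℝ → ℝ) ∘ w) = Matrix.diagonal w := by
  congr 1

lemma rank_add_smul_one {n : Type*} [Fintype n] [DecidableEq n] {M : Matrix n n ℝ}
    (hM : M.IsHermitian) (c : ℝ) :
    (M + c • 1).rank = Fintype.card {i // hM.eigenvalues i + c ≠ 0} := by
  set U := hM.eigenvectorUnitary with hU
  have h2 : (U : Matrix n n ℝ) * star (U : Matrix n n ℝ) = 1 := Matrix.mem_unitaryGroup_iff.mp U.2
  have key : M + c • 1 = (U : Matrix n n ℝ)
      * Matrix.diagonal (fun i => hM.eigenvalues i + c) * star (U : Matrix n n ℝ) := by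
    conv_lhs => rw [hM.spectral_theorem, Unitary.conjStarAlgAut_apply]
    have hc : (c • 1 : Matrix n n ℝ)
        = (U : Matrix n n ℝ) * (c • 1) * star (U : Matrix n n ℝ) := by
      rw [Matrix.mul_smul, mul_one, Matrix.smul_mul, h2]
    rw [hc, ← Matrix.add_mul, ← Matrix.mul_add]
    congr 1
    congr 1
    rw [diag_real, show (c • 1 : Matrix n n ℝ) = Matrix.diagonal (fun _ => c) by
      ext i j; by_cases h : i = j <;> simp [Matrix.one_apply, Matrix.diagonal_apply, h],
      Matrix.diagonal_add]
  rw [key, rank_unitary_conj, Matrix.rank_diagonal]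

lemma sum_eigenvalues_eq_trace' {n : Type*} [Fintype n] [DecidableEq n] {M : Matrix n n ℝ}
    (hM : M.IsHermitian) : ∑ i, hM.eigenvalues i = M.trace := by
  conv_rhs => rw [hM.spectral_theorem, Unitary.conjStarAlgAut_apply]
  rw [Matrix.trace_mul_cycle, Matrix.mem_unitaryGroup_iff'.mp hM.eigenvectorUnitary.2, one_mul,
    diag_real, Matrix.trace_diagonal]

lemma posSemidef_sub {V : Type*} [Fintype V] [DecidableEq V] (G : SimpleGraph V)
    [DecidableRel G.Adj]
    (hdeg : ∀ u v, G.Adj u v → 6 ≤ G.degree u + G.degree v) :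
    (inc (G.lineGraph) * (inc (G.lineGraph))ᵀ - (2:ℝ) • 1).PosSemidef := by
  have h1 := inc_mul_transpose (G.lineGraph)
  have h2 := transpose_inc_mul_inc G
  have key : inc (G.lineGraph) * (inc (G.lineGraph))ᵀ - (2:ℝ) • 1
      = Matrix.diagonal (fun e => ((G.lineGraph).degree e : ℝ) - 4) + (inc G)ᵀ * inc G := by
    rw [h1, h2]
    rw [show (Matrix.diagonal fun e => ((G.lineGraph).degree e : ℝ) - 4)
        = Matrix.diagonal (fun e => ((G.lineGraph).degree e : ℝ))
          + Matrix.diagonal (fun _ => (-4 : ℝ)) by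
      ext i j; by_cases h : i = j <;> first | (simp [Matrix.diagonal_apply, h]; ring) | simp [Matrix.diagonal_apply, h]]
    rw [show (Matrix.diagonal fun _ : G.edgeSet => (-4 : ℝ)) = -((4:ℝ) • 1) by
      ext i j; by_cases h : i = j <;> simp [Matrix.one_apply, Matrix.diagonal_apply, h]]
    module
  rw [key]
  refine Matrix.PosSemidef.add (Matrix.PosSemidef.diagonal fun e => ?_) ?_
  · have h4 := four_le_lineGraph_degree G hdeg e
    have h4' : (4:ℝ) ≤ ((G.lineGraph).degree e : ℝ) := by exact_mod_cast h4
    simp only [Pi.zero_apply]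
    linarith
  · have := Matrix.posSemidef_conjTranspose_mul_self (inc G)
    rwa [conjT_eq_transpose] at this

lemma posDef_Q {V : Type*} [Fintype V] [DecidableEq V] (G : SimpleGraph V)
    [DecidableRel G.Adj]
    (hdeg : ∀ u v, G.Adj u v → 6 ≤ G.degree u + G.degree v) :
    (inc (G.lineGraph) * (inc (G.lineGraph))ᵀ).PosDef := by
  have hps := posSemidef_sub G hdeg
  have hpd : ((2:ℝ) • 1 : Matrix G.edgeSet G.edgeSet ℝ).PosDef := by
    rw [show ((2:ℝ) • 1 : Matrix G.edgeSet G.edgeSet ℝ) = Matrix.diagonal (fun _ => (2:ℝ)) by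
      ext i j; by_cases h : i = j <;> simp [Matrix.one_apply, Matrix.diagonal_apply, h]]
    exact Matrix.posDef_diagonal_iff.mpr fun _ => two_pos
  have heq : inc (G.lineGraph) * (inc (G.lineGraph))ᵀ
      = (inc (G.lineGraph) * (inc (G.lineGraph))ᵀ - (2:ℝ) • 1) + (2:ℝ) • 1 := by
    rw [sub_add_cancel]
  rw [heq]
  exact Matrix.PosDef.posSemidef_add hps hpd

end IterAux

open IterAux Matrix Finset in
theorem iterated_lineGraph_property_rho_energy {V : Type*} [Fintype V] [DecidableEq V]
    (G : SimpleGraph V) [DecidableRel G.Adj]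
    (hdeg : ∀ u v, G.Adj u v → 6 ≤ G.degree u + G.degree v)
    (hH : ((G.lineGraph.lineGraph).adjMatrix ℝ).IsHermitian) :
    (∀ i, hH.eigenvalues i < 0 → hH.eigenvalues i = -2) ∧
      ∑ i, |hH.eigenvalues i| =
        4 * ((Fintype.card (G.lineGraph).edgeSet : ℝ) - (Fintype.card G.edgeSet : ℝ)) := by
  set B := inc (G.lineGraph) with hB
  have hBB : (G.lineGraph.lineGraph).adjMatrix ℝ + (2:ℝ) • 1 = Bᵀ * B :=
    (transpose_inc_mul_inc (G.lineGraph)).symm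
  have hpsdBB : (Bᵀ * B).PosSemidef := by
    have h := Matrix.posSemidef_conjTranspose_mul_self B
    rwa [conjT_eq_transpose] at h
  have hpsdQ2 := posSemidef_sub G hdeg
  rw [← hB] at hpsdQ2
  have part1 : ∀ i, hH.eigenvalues i < 0 → hH.eigenvalues i = -2 := by
    intro i hi
    by_contra hne
    have hx := hH.mulVec_eigenvectorBasis i
    set lam := hH.eigenvalues i with hlam
    set x : ((G.lineGraph).edgeSet : Type _) → ℝ := ⇑(hH.eigenvectorBasis i) with hxdef
    have hxne : x ≠ 0 := by
      intro h
      exact hH.eigenvectorBasis.orthonormal.ne_zero i (by ext j; exact congrFun h j)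
    have hx0 : 0 ≤ x ⬝ᵥ x := Finset.sum_nonneg fun j _ => mul_self_nonneg (x j)
    have hxpos : 0 < x ⬝ᵥ x := by
      rcases lt_or_eq_of_le hx0 with h | h
      · exact h
      · exact absurd (dotProduct_self_eq_zero.mp h.symm) hxne
    have hmulx : (Bᵀ * B) *ᵥ x = (lam + 2) • x := by
      rw [← hBB, Matrix.add_mulVec, hx, Matrix.smul_mulVec, Matrix.one_mulVec, ← add_smul]
    have hsx : star x = x := by ext j; simp
    have hmu : 0 ≤ lam + 2 := by
      have h := hpsdBB.dotProduct_mulVec_nonneg x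
      rw [hmulx, hsx, dotProduct_smul] at h
      simp only [smul_eq_mul] at h
      nlinarith [hxpos, h]
    have hmupos : 0 < lam + 2 := lt_of_le_of_ne hmu (fun h => hne (by linarith))
    have hyy : (B *ᵥ x) ⬝ᵥ (B *ᵥ x) = (lam + 2) * (x ⬝ᵥ x) := by
      have h1 : x ⬝ᵥ ((Bᵀ * B) *ᵥ x) = (B *ᵥ x) ⬝ᵥ (B *ᵥ x) := by
        rw [← Matrix.mulVec_mulVec, Matrix.dotProduct_mulVec, Matrix.vecMul_transpose]
      rw [← h1, hmulx, dotProduct_smul, smul_eq_mul]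
    have hypos : 0 < (B *ᵥ x) ⬝ᵥ (B *ᵥ x) := by rw [hyy]; exact mul_pos hmupos hxpos
    have hQy : (B * Bᵀ) *ᵥ (B *ᵥ x) = (lam + 2) • (B *ᵥ x) := by
      rw [Matrix.mulVec_mulVec, Matrix.mul_assoc, ← Matrix.mulVec_mulVec, hmulx,
        Matrix.mulVec_smul]
    have hsy : star (B *ᵥ x) = B *ᵥ x := by ext j; simp
    have h := hpsdQ2.dotProduct_mulVec_nonneg (B *ᵥ x)
    rw [hsy, Matrix.sub_mulVec, hQy, Matrix.smul_mulVec, Matrix.one_mulVec,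
      dotProduct_sub, dotProduct_smul, dotProduct_smul] at h
    simp only [smul_eq_mul] at h
    nlinarith [hypos, hi, h]
  refine ⟨part1, ?_⟩
  have htr : ∑ i, hH.eigenvalues i = 0 := by
    rw [sum_eigenvalues_eq_trace' hH, SimpleGraph.trace_adjMatrix]
  have habs : ∀ i, |hH.eigenvalues i|
      = hH.eigenvalues i + (if hH.eigenvalues i < 0 then (4:ℝ) else 0) := by
    intro i
    by_cases h : hH.eigenvalues i < 0
    · rw [if_pos h, part1 i h]; norm_num
    · rw [if_neg h, abs_of_nonneg (not_lt.mp h), add_zero]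
  have hsum : ∑ i, |hH.eigenvalues i|
      = 4 * ((Finset.univ.filter fun i => hH.eigenvalues i < 0).card : ℝ) := by
    rw [Finset.sum_congr rfl fun i _ => habs i, Finset.sum_add_distrib, htr, zero_add,
      ← Finset.sum_filter, Finset.sum_const, nsmul_eq_mul]
    ring
  have hrank1 : ((G.lineGraph.lineGraph).adjMatrix ℝ + (2:ℝ) • 1).rank
      = Fintype.card {i // hH.eigenvalues i + 2 ≠ 0} := rank_add_smul_one hH 2
  have hPD := posDef_Q G hdeg
  rw [← hB] at hPD
  have hrank2 : (Bᵀ * B).rank = Fintype.card G.edgeSet := by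
    rw [Matrix.rank_transpose_mul_self]
    have h := Matrix.rank_of_isUnit _ hPD.isUnit
    rwa [Matrix.rank_self_mul_transpose] at h
  have hr : Fintype.card {i // hH.eigenvalues i + 2 ≠ 0} = Fintype.card G.edgeSet := by
    rw [← hrank2, ← hrank1, hBB]
  have hcompl : Fintype.card {i // hH.eigenvalues i + 2 ≠ 0}
      = Fintype.card {i // ¬ (hH.eigenvalues i = -2)} :=
    Fintype.card_congr (Equiv.subtypeEquivRight fun i => by
      constructor
      · intro h h2; exact h (by rw [h2]; ring)
      · intro h h2; exact h (by linarith))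
  have hA2 : Fintype.card {i // ¬ (hH.eigenvalues i = -2)} = Fintype.card G.edgeSet := by
    rw [← hcompl]; exact hr
  have hB2 : Fintype.card {i // ¬ (hH.eigenvalues i = -2)}
      = Fintype.card ((G.lineGraph).edgeSet : Type _)
        - Fintype.card {i // hH.eigenvalues i = -2} :=
    Fintype.card_subtype_compl _
  have hsuble : Fintype.card {i // hH.eigenvalues i = -2}
      ≤ Fintype.card ((G.lineGraph).edgeSet : Type _) := Fintype.card_subtype_le _
  have hfilter : (Finset.univ.filter fun i => hH.eigenvalues i < 0)
      = Finset.univ.filter fun i => hH.eigenvalues i = -2 := by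
    apply Finset.filter_congr
    intro i _
    constructor
    · exact part1 i
    · intro h; rw [h]; norm_num
  have hcount : (Finset.univ.filter fun i => hH.eigenvalues i < 0).card
      = Fintype.card ((G.lineGraph).edgeSet : Type _) - Fintype.card G.edgeSet := by
    rw [hfilter, ← Fintype.card_subtype]
    omega
  have hn1len2 : Fintype.card G.edgeSet ≤ Fintype.card ((G.lineGraph).edgeSet : Type _) := by
    omega
  rw [hsum, hcount, Nat.cast_sub hn1len2]
end

section
/- Let G be a graph on n vertices whose adjacency eigenvalues satisfy: all negative eigenvalues equal −2, with multiplicity k, and every eigenvector for the eigenvalue −2 is orthogonal to the all-ones vector. Then 1 is an eigenvalue of the complement \bar{G} with multiplicity at least k, and \bar{G} has at most two distinct positive eigenvalues. -/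
open Matrix
open scoped Classical

private theorem aux_inner_eq_dot {n : ℕ} (x y : EuclideanSpace ℝ (Fin n)) :
    (inner ℝ x y : ℝ) = ⇑x ⬝ᵥ ⇑y := by
  simp [PiLp.inner_apply, dotProduct, mul_comm]

private theorem aux_symm_dot {n : ℕ} {M : Matrix (Fin n) (Fin n) ℝ} (h : M.IsSymm)
    (x y : Fin n → ℝ) : x ⬝ᵥ (M *ᵥ y) = (M *ᵥ x) ⬝ᵥ y := by
  rw [Matrix.dotProduct_mulVec, ← Matrix.mulVec_transpose, h]

private theorem aux_compl_mulVec {n : ℕ} (G : SimpleGraph (Fin n)) [DecidableRel G.Adj]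
    (x : Fin n → ℝ) :
    (Gᶜ).adjMatrix ℝ *ᵥ x = (fun _ => ∑ j, x j) - x - G.adjMatrix ℝ *ᵥ x := by
  funext i
  simp only [mulVec, dotProduct, Pi.sub_apply, SimpleGraph.adjMatrix_apply,
    SimpleGraph.compl_adj]
  rw [show x i = ∑ j, if j = i then x j else 0 by simp]
  rw [← Finset.sum_sub_distrib, ← Finset.sum_sub_distrib]
  apply Finset.sum_congr rfl
  intro j _
  by_cases h1 : j = i
  · subst h1; simp
  · by_cases h2 : G.Adj i j <;> simp [h1, h2, Ne.symm h1]

private theorem aux_sum_repr {n : ℕ} {M : Matrix (Fin n) (Fin n) ℝ} (hM : M.IsHermitian)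
    (w : Fin n → ℝ) :
    ∑ i, (⇑(hM.eigenvectorBasis i) ⬝ᵥ w) • ⇑(hM.eigenvectorBasis i) = w := by
  have h := hM.eigenvectorBasis.sum_repr' ((WithLp.equiv 2 (Fin n → ℝ)).symm w)
  have h2 : ∀ i, (inner ℝ (hM.eigenvectorBasis i) ((WithLp.equiv 2 (Fin n → ℝ)).symm w) : ℝ)
      = ⇑(hM.eigenvectorBasis i) ⬝ᵥ w := by
    intro i
    simp only [PiLp.inner_apply, RCLike.inner_apply, starRingEnd_apply, star_trivial, dotProduct,
      WithLp.equiv_symm_apply, PiLp.toLp_apply]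
    exact Finset.sum_congr rfl fun _ _ => mul_comm _ _
  simp_rw [h2] at h
  have h3 := congrArg (WithLp.linearEquiv 2 ℝ (Fin n → ℝ)) h
  rw [map_sum] at h3
  simp only [_root_.map_smul] at h3
  exact h3

private theorem aux_sum_dot {n : ℕ} (f : Fin n → Fin n → ℝ) (y : Fin n → ℝ) :
    (∑ i, f i) ⬝ᵥ y = ∑ i, f i ⬝ᵥ y := by
  simp only [dotProduct, Finset.sum_apply, Finset.sum_mul]
  exact Finset.sum_comm

private theorem aux_quad_nonneg {n : ℕ} {M : Matrix (Fin n) (Fin n) ℝ} (hM : M.IsHermitian)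
    (hsym : M.IsSymm)
    (hnonneg : ∀ i, ¬ hM.eigenvalues i < 0 → 0 ≤ hM.eigenvalues i)
    (w : Fin n → ℝ)
    (h0 : ∀ i, hM.eigenvalues i < 0 → ⇑(hM.eigenvectorBasis i) ⬝ᵥ w = 0) :
    0 ≤ w ⬝ᵥ (M *ᵥ w) := by
  have hw := aux_sum_repr hM w
  have key : w ⬝ᵥ (M *ᵥ w)
      = ∑ i, (⇑(hM.eigenvectorBasis i) ⬝ᵥ w)^2 * hM.eigenvalues i := by
    nth_rewrite 1 [← hw]
    rw [aux_sum_dot]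
    apply Finset.sum_congr rfl
    intro i _
    rw [smul_dotProduct, aux_symm_dot hsym, hM.mulVec_eigenvectorBasis, smul_dotProduct]
    simp only [smul_eq_mul]
    ring
  rw [key]
  apply Finset.sum_nonneg
  intro i _
  by_cases hi : hM.eigenvalues i < 0
  · rw [h0 i hi]; simp
  · have := hnonneg i hi
    positivity

theorem complement_two_positive_eigenvalues {n : ℕ}
    (G : SimpleGraph (Fin n)) [DecidableRel G.Adj]
    (hA : (G.adjMatrix ℝ).IsHermitian) (hAc : ((Gᶜ).adjMatrix ℝ).IsHermitian)
    (hneg : ∀ i, hA.eigenvalues i < 0 → hA.eigenvalues i = -2)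
    (horth : ∀ Y : Fin n → ℝ, G.adjMatrix ℝ *ᵥ Y = (-2 : ℝ) • Y → ∑ i, Y i = 0) :
    (Finset.univ.filter fun i => hA.eigenvalues i < 0).card ≤
        (Finset.univ.filter fun i => hAc.eigenvalues i = 1).card ∧
      ((Finset.univ.filter fun i => 0 < hAc.eigenvalues i).image hAc.eigenvalues).card ≤ 2 := by
  have hsymB : ((Gᶜ).adjMatrix ℝ).IsSymm := (Gᶜ).isSymm_adjMatrix
  have hsymA : (G.adjMatrix ℝ).IsSymm := G.isSymm_adjMatrix
  -- eigenvectors of A with negative eigenvalue are eigenvectors of B with eigenvalue 1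
  have hv1 : ∀ i, hA.eigenvalues i < 0 →
      (Gᶜ).adjMatrix ℝ *ᵥ ⇑(hA.eigenvectorBasis i) = ⇑(hA.eigenvectorBasis i) := by
    intro i hi
    have he : G.adjMatrix ℝ *ᵥ ⇑(hA.eigenvectorBasis i)
        = (-2 : ℝ) • ⇑(hA.eigenvectorBasis i) := by
      rw [hA.mulVec_eigenvectorBasis, hneg i hi]
    have hs := horth _ he
    rw [aux_compl_mulVec, he]
    funext j
    simp only [Pi.sub_apply, Pi.smul_apply, smul_eq_mul, hs]
    ring
  -- cross orthogonality
  have hcross : ∀ i j, hA.eigenvalues i < 0 → hAc.eigenvalues j ≠ 1 →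
      ⇑(hAc.eigenvectorBasis j) ⬝ᵥ ⇑(hA.eigenvectorBasis i) = 0 := by
    intro i j hi hj
    have e1 : ⇑(hAc.eigenvectorBasis j) ⬝ᵥ ((Gᶜ).adjMatrix ℝ *ᵥ ⇑(hA.eigenvectorBasis i))
        = ⇑(hAc.eigenvectorBasis j) ⬝ᵥ ⇑(hA.eigenvectorBasis i) := by rw [hv1 i hi]
    have e2 : ⇑(hAc.eigenvectorBasis j) ⬝ᵥ ((Gᶜ).adjMatrix ℝ *ᵥ ⇑(hA.eigenvectorBasis i))
        = hAc.eigenvalues j * (⇑(hAc.eigenvectorBasis j) ⬝ᵥ ⇑(hA.eigenvectorBasis i)) := by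
      rw [aux_symm_dot hsymB, hAc.mulVec_eigenvectorBasis, smul_dotProduct, smul_eq_mul]
    have e3 : (hAc.eigenvalues j - 1) * (⇑(hAc.eigenvectorBasis j) ⬝ᵥ ⇑(hA.eigenvectorBasis i))
        = 0 := by rw [e1] at e2; linarith [e2]
    rcases mul_eq_zero.mp e3 with h | h
    · exact absurd (by linarith : hAc.eigenvalues j = 1) hj
    · exact h
  constructor
  · -- part 1
    set S := Finset.univ.filter fun i => hA.eigenvalues i < 0 with hS
    set T := Finset.univ.filter fun j => hAc.eigenvalues j = 1 with hT
    set W : Submodule ℝ (EuclideanSpace ℝ (Fin n)) :=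
      Submodule.span ℝ (↑(T.image fun j => hAc.eigenvectorBasis j)) with hW
    have hmem : ∀ i ∈ S, (hA.eigenvectorBasis i : EuclideanSpace ℝ (Fin n)) ∈ W := by
      intro i hi
      have hi' : hA.eigenvalues i < 0 := by
        simpa [hS] using hi
      have hrep := hAc.eigenvectorBasis.sum_repr (hA.eigenvectorBasis i)
      rw [← hrep]
      apply Submodule.sum_mem
      intro j _
      by_cases hj : hAc.eigenvalues j = 1
      · exact Submodule.smul_mem _ _ (Submodule.subset_span (by
          simp only [Finset.coe_image, Set.mem_image, Finset.mem_coe]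
          exact ⟨j, by simp [hT, hj], rfl⟩))
      · have hz : hAc.eigenvectorBasis.repr (hA.eigenvectorBasis i) j = 0 := by
          rw [OrthonormalBasis.repr_apply_apply, aux_inner_eq_dot]
          exact hcross i j hi' hj
        rw [hz, zero_smul]
        exact Submodule.zero_mem _
    have hli : LinearIndependent ℝ
        (fun i : {x // x ∈ S} => (hA.eigenvectorBasis i : EuclideanSpace ℝ (Fin n))) :=
      (hA.eigenvectorBasis.orthonormal.comp Subtype.val Subtype.val_injective).linearIndependent
    have hli' : LinearIndependent ℝ
        (fun i : {x // x ∈ S} => (⟨hA.eigenvectorBasis i, hmem i i.2⟩ : W)) :=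
      LinearIndependent.of_comp W.subtype hli
    have h1 : S.card ≤ Module.finrank ℝ W := by
      simpa [Fintype.card_coe] using hli'.fintype_card_le_finrank
    have h2 : Module.finrank ℝ W ≤ T.card :=
      le_trans (finrank_span_finset_le_card _) Finset.card_image_le
    omega
  · -- part 2
    by_contra hcon
    push_neg at hcon
    rw [Finset.two_lt_card] at hcon
    obtain ⟨a, ha, b, hb, c, hc, hab, hac, hbc⟩ := hcon
    obtain ⟨p, q, hp, hq, hpq, hp1, hq1⟩ : ∃ p q,
        p ∈ ((Finset.univ.filter fun i => 0 < hAc.eigenvalues i).image hAc.eigenvalues) ∧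
        q ∈ ((Finset.univ.filter fun i => 0 < hAc.eigenvalues i).image hAc.eigenvalues) ∧
        p ≠ q ∧ p ≠ 1 ∧ q ≠ 1 := by
      by_cases h1 : a = 1
      · exact ⟨b, c, hb, hc, hbc, fun h => hab (h1.trans h.symm),
          fun h => hac (h1.trans h.symm)⟩
      · by_cases h2 : b = 1
        · exact ⟨a, c, ha, hc, hac, h1, fun h => hbc (h2.trans h.symm)⟩
        · exact ⟨a, b, ha, hb, hab, h1, h2⟩
    obtain ⟨j1, hj1mem, hj1⟩ := Finset.mem_image.mp hp
    obtain ⟨j2, hj2mem, hj2⟩ := Finset.mem_image.mp hq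
    have hj1pos : 0 < hAc.eigenvalues j1 := by simpa using (Finset.mem_filter.mp hj1mem).2
    have hj2pos : 0 < hAc.eigenvalues j2 := by simpa using (Finset.mem_filter.mp hj2mem).2
    have hj12 : j1 ≠ j2 := fun h => hpq (by rw [← hj1, ← hj2, h])
    set u1 : Fin n → ℝ := ⇑(hAc.eigenvectorBasis j1) with hu1
    set u2 : Fin n → ℝ := ⇑(hAc.eigenvectorBasis j2) with hu2
    have hd11 : u1 ⬝ᵥ u1 = 1 := by
      rw [← aux_inner_eq_dot]
      have := hAc.eigenvectorBasis.orthonormal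
      rw [orthonormal_iff_ite] at this
      simpa using this j1 j1
    have hd22 : u2 ⬝ᵥ u2 = 1 := by
      rw [← aux_inner_eq_dot]
      have := hAc.eigenvectorBasis.orthonormal
      rw [orthonormal_iff_ite] at this
      simpa using this j2 j2
    have hd12 : u1 ⬝ᵥ u2 = 0 := by
      rw [← aux_inner_eq_dot]
      have := hAc.eigenvectorBasis.orthonormal
      rw [orthonormal_iff_ite] at this
      simpa [hj12] using this j1 j2
    have hd21 : u2 ⬝ᵥ u1 = 0 := by rw [dotProduct_comm]; exact hd12
    set s1 : ℝ := ∑ i, u1 i with hs1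
    set s2 : ℝ := ∑ i, u2 i with hs2
    obtain ⟨α, β, hab0, habs⟩ : ∃ α β : ℝ, ¬(α = 0 ∧ β = 0) ∧ α * s1 + β * s2 = 0 := by
      by_cases hs : s1 = 0
      · exact ⟨1, 0, by simp, by simp [hs]⟩
      · exact ⟨s2, -s1, by simp [hs], by ring⟩
    set w : Fin n → ℝ := α • u1 + β • u2 with hwdef
    have hsumw : ∑ j, w j = 0 := by
      simp only [hwdef, Pi.add_apply, Pi.smul_apply, smul_eq_mul]
      rw [Finset.sum_add_distrib, ← Finset.mul_sum, ← Finset.mul_sum, ← hs1, ← hs2]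
      exact habs
    have hBu1 : (Gᶜ).adjMatrix ℝ *ᵥ u1 = hAc.eigenvalues j1 • u1 :=
      hAc.mulVec_eigenvectorBasis j1
    have hBu2 : (Gᶜ).adjMatrix ℝ *ᵥ u2 = hAc.eigenvalues j2 • u2 :=
      hAc.mulVec_eigenvectorBasis j2
    have hBw : (Gᶜ).adjMatrix ℝ *ᵥ w = (α * p) • u1 + (β * q) • u2 := by
      rw [hwdef, mulVec_add, mulVec_smul, mulVec_smul, hBu1, hBu2, hj1, hj2]
      funext i; simp; ring
    have hquadB : w ⬝ᵥ ((Gᶜ).adjMatrix ℝ *ᵥ w) = p * α^2 + q * β^2 := by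
      rw [hBw, hwdef]
      simp only [add_dotProduct, dotProduct_add, smul_dotProduct, dotProduct_smul,
        smul_eq_mul, hd11, hd22, hd12, hd21]
      ring
    have hww : w ⬝ᵥ w = α^2 + β^2 := by
      rw [hwdef]
      simp only [add_dotProduct, dotProduct_add, smul_dotProduct, dotProduct_smul,
        smul_eq_mul, hd11, hd22, hd12, hd21]
      ring
    have hquadA : 0 ≤ w ⬝ᵥ (G.adjMatrix ℝ *ᵥ w) := by
      apply aux_quad_nonneg hA hsymA (fun i hi => le_of_not_gt hi)
      intro i hi
      have c1 := hcross i j1 hi (by rw [hj1]; exact hp1)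
      have c2 := hcross i j2 hi (by rw [hj2]; exact hq1)
      rw [dotProduct_comm, hwdef]
      simp only [add_dotProduct, smul_dotProduct, smul_eq_mul, hu1, hu2, c1, c2]
      ring
    have hBw2 : w ⬝ᵥ ((Gᶜ).adjMatrix ℝ *ᵥ w)
        = - (w ⬝ᵥ w) - w ⬝ᵥ (G.adjMatrix ℝ *ᵥ w) := by
      rw [aux_compl_mulVec, dotProduct_sub, dotProduct_sub]
      have : w ⬝ᵥ (fun _ => ∑ j, w j) = 0 := by
        simp [dotProduct, ← Finset.sum_mul, hsumw]
      rw [this]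
      ring
    have hab2 : 0 < α^2 + β^2 := by
      rcases not_and_or.mp hab0 with h | h
      · positivity
      · positivity
    nlinarith [hquadB, hww, hquadA, hBw2, hab2, mul_pos hj1pos hab2, hj1, hj2,
      mul_nonneg (le_of_lt hj1pos) (sq_nonneg α), mul_nonneg (le_of_lt hj2pos) (sq_nonneg β)]
end

section
/- Let n ≥ 6 and let Ka_n(n−4) be the graph obtained from the complete graph K_n by deleting n−4 edges all incident to a single vertex. Then every signless Laplacian eigenvalue of Ka_n(n−4) is at least 2; in particular the least one is n − 1/2 − (1/2)√(4n(n−7)+73) ≥ 2. -/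
open scoped Classical

/-- The graph `Ka_n(p)`: the complete graph on `Fin n` with the edges from the vertex `v0` to
the vertices of `S` deleted. -/
def kan {n : ℕ} (v0 : Fin n) (S : Finset (Fin n)) : SimpleGraph (Fin n) where
  Adj u v := u ≠ v ∧ ¬(u = v0 ∧ v ∈ S) ∧ ¬(v = v0 ∧ u ∈ S)
  symm := ⟨by rintro u v ⟨h1, h2, h3⟩; exact ⟨h1.symm, h3, h2⟩⟩
  loopless := ⟨by rintro v ⟨h, _⟩; exact h rfl⟩

open Polynomial Matrix Finset

section Aux

lemma eval_charpoly' {m : Type*} [Fintype m] [DecidableEq m] (M : Matrix m m ℝ) (x : ℝ) :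
    M.charpoly.eval x = (x • (1 : Matrix m m ℝ) - M).det := by
  rw [Matrix.charpoly, ← Polynomial.coe_evalRingHom, RingHom.map_det]
  congr 1
  ext i j
  by_cases h : i = j <;>
    simp [Matrix.charmatrix_apply, h, Matrix.one_apply, Matrix.diagonal_apply]

variable {n : ℕ} {v0 : Fin n} {S : Finset (Fin n)}

lemma kan_adj {u v : Fin n} :
    (kan v0 S).Adj u v ↔ u ≠ v ∧ ¬(u = v0 ∧ v ∈ S) ∧ ¬(v = v0 ∧ u ∈ S) := Iff.rfl

lemma nbr_v0 (hv0 : v0 ∉ S) : (kan v0 S).neighborFinset v0 = (insert v0 S)ᶜ := by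
  ext w
  rw [SimpleGraph.mem_neighborFinset, kan_adj, Finset.mem_compl, Finset.mem_insert, not_or]
  constructor
  · rintro ⟨h1, h2, h3⟩
    exact ⟨fun hh => h1 hh.symm, fun hw => h2 ⟨rfl, hw⟩⟩
  · rintro ⟨h1, h2⟩
    exact ⟨fun hh => h1 hh.symm, fun ⟨_, hw⟩ => h2 hw, fun ⟨hh, _⟩ => h1 hh⟩

lemma degree_v0 (hn : 6 ≤ n) (hv0 : v0 ∉ S) (hS : S.card = n - 4) :
    (kan v0 S).degree v0 = 3 := by
  rw [SimpleGraph.degree, nbr_v0 hv0, Finset.card_compl, Finset.card_insert_of_notMem hv0,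
    hS, Fintype.card_fin]
  omega

lemma nbr_S {v : Fin n} (hv : v ∈ S) (hv0 : v0 ∉ S) :
    (kan v0 S).neighborFinset v = ({v0, v} : Finset (Fin n))ᶜ := by
  have hvne : v ≠ v0 := fun h => hv0 (h ▸ hv)
  ext w
  simp only [SimpleGraph.mem_neighborFinset, kan_adj, Finset.mem_compl, Finset.mem_insert,
    Finset.mem_singleton]
  constructor
  · rintro ⟨h1, h2, h3⟩ (rfl | rfl)
    · exact h3 ⟨rfl, hv⟩
    · exact h1 rfl
  · intro h
    exact ⟨fun hh => h (Or.inr hh.symm), fun ⟨hh, _⟩ => absurd hh hvne,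
      fun ⟨hh, _⟩ => h (Or.inl hh)⟩

lemma degree_S (hv0 : v0 ∉ S) {v : Fin n} (hv : v ∈ S) : (kan v0 S).degree v = n - 2 := by
  have hvne : v0 ≠ v := fun h => hv0 (h ▸ hv)
  rw [SimpleGraph.degree, nbr_S hv hv0, Finset.card_compl, Fintype.card_fin,
    Finset.card_insert_of_notMem (by simpa using hvne), Finset.card_singleton]

lemma nbr_T {v : Fin n} (hv1 : v ≠ v0) (hv2 : v ∉ S) :
    (kan v0 S).neighborFinset v = ({v} : Finset (Fin n))ᶜ := by
  ext w
  simp only [SimpleGraph.mem_neighborFinset, kan_adj, Finset.mem_compl, Finset.mem_singleton]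
  constructor
  · rintro ⟨h1, _, _⟩ rfl; exact h1 rfl
  · intro h
    exact ⟨fun hh => h hh.symm, fun ⟨hh, _⟩ => absurd hh hv1, fun ⟨_, hh⟩ => absurd hh hv2⟩

lemma degree_T {v : Fin n} (hv1 : v ≠ v0) (hv2 : v ∉ S) : (kan v0 S).degree v = n - 1 := by
  rw [SimpleGraph.degree, nbr_T hv1 hv2, Finset.card_compl, Fintype.card_fin,
    Finset.card_singleton]

/-- the diagonal part of `x•1 - Q`. -/
noncomputable def dd (v0 : Fin n) (S : Finset (Fin n)) (x : ℝ) : Fin n → ℝ := fun v =>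
  if v = v0 then x - 2 else if v ∈ S then x - ((n : ℝ) - 3) else x - ((n : ℝ) - 2)

noncomputable def Uu (v0 : Fin n) (S : Finset (Fin n)) : Matrix (Fin n) (Fin 3) ℝ :=
  Matrix.of fun v j => ![(-1 : ℝ), if v = v0 then 1 else 0, if v ∈ S then 1 else 0] j

noncomputable def Vv (v0 : Fin n) (S : Finset (Fin n)) : Matrix (Fin 3) (Fin n) ℝ :=
  Matrix.of fun j v => ![(1 : ℝ), if v ∈ S then 1 else 0, if v = v0 then 1 else 0] j

lemma decomp (hn : 6 ≤ n) (hv0 : v0 ∉ S) (hS : S.card = n - 4) (x : ℝ) :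
    x • (1 : Matrix (Fin n) (Fin n) ℝ) - qMatrix (kan v0 S)
      = Matrix.diagonal (dd v0 S x) + Uu v0 S * Vv v0 S := by
  have h2 : ((n - 2 : ℕ) : ℝ) = (n : ℝ) - 2 := by
    rw [Nat.cast_sub (by omega)]; norm_num
  have h1 : ((n - 1 : ℕ) : ℝ) = (n : ℝ) - 1 := by
    rw [Nat.cast_sub (by omega)]; norm_num
  ext u w
  have hdv0 : ((kan v0 S).degree v0 : ℝ) = 3 := by rw [degree_v0 hn hv0 hS]; norm_num
  have hdS : ∀ v, v ∈ S → ((kan v0 S).degree v : ℝ) = (n : ℝ) - 2 := fun v hv => by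
    rw [degree_S hv0 hv, h2]
  have hdT : ∀ v, v ≠ v0 → v ∉ S → ((kan v0 S).degree v : ℝ) = (n : ℝ) - 1 := fun v h h' => by
    rw [degree_T h h', h1]
  have hUV : (Uu v0 S * Vv v0 S) u w = -1 + (if u = v0 then (1:ℝ) else 0) * (if w ∈ S then 1 else 0)
      + (if u ∈ S then (1:ℝ) else 0) * (if w = v0 then 1 else 0) := by
    simp only [Uu, Vv, Matrix.mul_apply, Fin.sum_univ_three, Matrix.of_apply,
      Matrix.cons_val_zero, Matrix.cons_val_one, Matrix.head_cons, Matrix.cons_val_two,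
      Matrix.tail_cons]
    ring
  rw [Matrix.sub_apply, Matrix.smul_apply, Matrix.add_apply, hUV, qMatrix, Matrix.add_apply,
    SimpleGraph.adjMatrix_apply]
  clear hUV
  by_cases huw : u = w <;> by_cases hu0 : u = v0 <;> by_cases hw0 : w = v0 <;>
    by_cases huS : u ∈ S <;> by_cases hwS : w ∈ S <;>
    simp_all [dd, Matrix.diagonal_apply, Matrix.one_apply, kan_adj, smul_eq_mul] <;>
    ring

lemma sum_split_s19 (hn : 6 ≤ n) (hv0 : v0 ∉ S) (hS : S.card = n - 4)
    (f : Fin n → ℝ) (bS cT : ℝ) (hfS : ∀ w ∈ S, f w = bS)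
    (hfT : ∀ w, w ≠ v0 → w ∉ S → f w = cT) :
    ∑ w, f w = f v0 + ((n : ℝ) - 4) * bS + 3 * cT := by
  rw [← Finset.sum_add_sum_compl (insert v0 S) f, Finset.sum_insert hv0]
  have h4 : ((n - 4 : ℕ) : ℝ) = (n : ℝ) - 4 := by rw [Nat.cast_sub (by omega)]; norm_num
  have hSsum : ∑ w ∈ S, f w = ((n : ℝ) - 4) * bS := by
    rw [Finset.sum_congr rfl hfS, Finset.sum_const, hS, nsmul_eq_mul, h4]
  have hTcard : ((insert v0 S)ᶜ : Finset (Fin n)).card = 3 := by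
    rw [Finset.card_compl, Finset.card_insert_of_notMem hv0, hS, Fintype.card_fin]; omega
  have hTsum : ∑ w ∈ (insert v0 S)ᶜ, f w = 3 * cT := by
    have hcT : ∀ w ∈ (insert v0 S)ᶜ, f w = cT := by
      intro w hw
      rw [Finset.mem_compl, Finset.mem_insert, not_or] at hw
      exact hfT w hw.1 hw.2
    rw [Finset.sum_congr rfl hcT, Finset.sum_const, hTcard, nsmul_eq_mul]
    norm_num
  rw [hSsum, hTsum]

lemma prod_split (hn : 6 ≤ n) (hv0 : v0 ∉ S) (hS : S.card = n - 4) (x : ℝ) :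
    ∏ v, dd v0 S x v
      = (x - 2) * (x - ((n : ℝ) - 3)) ^ (n - 4) * (x - ((n : ℝ) - 2)) ^ 3 := by
  rw [← Finset.prod_mul_prod_compl (insert v0 S) (dd v0 S x), Finset.prod_insert hv0]
  have hSprod : ∏ w ∈ S, dd v0 S x w = (x - ((n : ℝ) - 3)) ^ (n - 4) := by
    have hcb : ∀ w ∈ S, dd v0 S x w = x - ((n : ℝ) - 3) := by
      intro w hw
      have : w ≠ v0 := fun h => hv0 (h ▸ hw)
      simp [dd, this, hw]
    rw [Finset.prod_congr rfl hcb, Finset.prod_const, hS]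
  have hTcard : ((insert v0 S)ᶜ : Finset (Fin n)).card = 3 := by
    rw [Finset.card_compl, Finset.card_insert_of_notMem hv0, hS, Fintype.card_fin]; omega
  have hTprod : ∏ w ∈ (insert v0 S)ᶜ, dd v0 S x w = (x - ((n : ℝ) - 2)) ^ 3 := by
    have hcc : ∀ w ∈ (insert v0 S)ᶜ, dd v0 S x w = x - ((n : ℝ) - 2) := by
      intro w hw
      rw [Finset.mem_compl, Finset.mem_insert, not_or] at hw
      simp [dd, hw.1, hw.2]
    rw [Finset.prod_congr rfl hcc, Finset.prod_const, hTcard]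
  rw [hSprod, hTprod, dd, if_pos rfl]

lemma det_eval (hn : 6 ≤ n) (hv0 : v0 ∉ S) (hS : S.card = n - 4) (x : ℝ) (hx : (n : ℝ) < x) :
    (x • (1 : Matrix (Fin n) (Fin n) ℝ) - qMatrix (kan v0 S)).det
      = (x - ((n : ℝ) - 2)) ^ 3 * (x - ((n : ℝ) - 3)) ^ (n - 5) *
        (x ^ 2 - (2 * (n : ℝ) - 1) * x + (6 * (n : ℝ) - 18)) := by
  have hN6 : (6 : ℝ) ≤ (n : ℝ) := by exact_mod_cast hn
  have ha : x - 2 ≠ 0 := by linarith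
  have hb : x - ((n : ℝ) - 3) ≠ 0 := by linarith
  have hc : x - ((n : ℝ) - 2) ≠ 0 := by linarith
  rw [decomp hn hv0 hS x]
  set a : ℝ := (x - 2)⁻¹ with hadef
  set b : ℝ := (x - ((n : ℝ) - 3))⁻¹ with hbdef
  set c : ℝ := (x - ((n : ℝ) - 2))⁻¹ with hcdef
  set d : Fin n → ℝ := dd v0 S x with hddef
  have hd : ∀ v, d v ≠ 0 := by
    intro v
    rw [hddef, dd]
    split_ifs <;> assumption
  set d' : Fin n → ℝ := fun v => (d v)⁻¹ with hd'def
  have hd'v0 : d' v0 = a := by rw [hd'def, hddef]; simp [dd, hadef]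
  have hd'S : ∀ w ∈ S, d' w = b := by
    intro w hw
    have hw0 : w ≠ v0 := fun h => hv0 (h ▸ hw)
    rw [hd'def, hddef]; simp [dd, hw0, hw, hbdef]
  have hd'T : ∀ w, w ≠ v0 → w ∉ S → d' w = c := by
    intro w h1 h2
    rw [hd'def, hddef]; simp [dd, h1, h2, hcdef]
  have hdd' : Matrix.diagonal d * Matrix.diagonal d' = 1 := by
    have : (fun i => d i * d' i) = fun _ : Fin n => (1 : ℝ) :=
      funext fun v => mul_inv_cancel₀ (hd v)
    rw [Matrix.diagonal_mul_diagonal, this, Matrix.diagonal_one]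
  have hfactor : Matrix.diagonal d + Uu v0 S * Vv v0 S
      = Matrix.diagonal d * (1 + Matrix.diagonal d' * Uu v0 S * Vv v0 S) := by
    rw [Matrix.mul_add, Matrix.mul_one, ← Matrix.mul_assoc, ← Matrix.mul_assoc, hdd',
      Matrix.one_mul]
  rw [hfactor, Matrix.det_mul, Matrix.det_one_add_mul_comm, Matrix.det_diagonal]
  have hE : (1 + Vv v0 S * (Matrix.diagonal d' * Uu v0 S)) =
      !![1 - (a + ((n:ℝ)-4)*b + 3*c), a, ((n:ℝ)-4)*b;
         -(((n:ℝ)-4)*b), 1, ((n:ℝ)-4)*b;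
         -a, a, 1] := by
    ext i j
    rw [Matrix.add_apply, Matrix.mul_apply]
    have hentry : ∀ w k, (Matrix.diagonal d' * Uu v0 S) w k = d' w * Uu v0 S w k :=
      fun w k => by rw [Matrix.diagonal_mul]
    simp only [hentry]
    fin_cases i <;> fin_cases j <;>
      simp only [Matrix.one_apply, Matrix.of_apply, Vv, Uu, Matrix.cons_val_zero,
        Matrix.cons_val_one, Matrix.head_cons, Matrix.cons_val_two, Matrix.tail_cons,
        Matrix.cons_val', Matrix.head_fin_const, Matrix.empty_val', Matrix.cons_val_fin_one]
    · rw [sum_split_s19 hn hv0 hS _ (-b) (-c)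
        (fun w hw => by simp [hd'S w hw]) (fun w h1 h2 => by simp [hd'T w h1 h2])]
      simp [hd'v0] <;> try ring
    · rw [sum_split_s19 hn hv0 hS _ 0 0
        (fun w hw => by have : w ≠ v0 := fun h => hv0 (h ▸ hw); simp [this])
        (fun w h1 h2 => by simp [h1])]
      simp [hd'v0] <;> try ring
    · rw [sum_split_s19 hn hv0 hS _ b 0
        (fun w hw => by simp [hd'S w hw, hw]) (fun w h1 h2 => by simp [h2])]
      simp [hv0] <;> try ring
    · rw [sum_split_s19 hn hv0 hS _ (-b) 0
        (fun w hw => by simp [hd'S w hw, hw]) (fun w h1 h2 => by simp [h2])]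
      simp [hv0] <;> try ring
    · rw [sum_split_s19 hn hv0 hS _ 0 0
        (fun w hw => by have : w ≠ v0 := fun h => hv0 (h ▸ hw); simp [this])
        (fun w h1 h2 => by simp [h1])]
      simp [hv0] <;> try ring
    · rw [sum_split_s19 hn hv0 hS _ b 0
        (fun w hw => by simp [hd'S w hw, hw]) (fun w h1 h2 => by simp [h2])]
      simp [hv0] <;> try ring
    · rw [sum_split_s19 hn hv0 hS _ 0 0
        (fun w hw => by have : w ≠ v0 := fun h => hv0 (h ▸ hw); simp [this])
        (fun w h1 h2 => by simp [h1])]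
      simp [hd'v0] <;> try ring
    · rw [sum_split_s19 hn hv0 hS _ 0 0
        (fun w hw => by have : w ≠ v0 := fun h => hv0 (h ▸ hw); simp [this])
        (fun w h1 h2 => by simp [h1])]
      simp [hd'v0] <;> try ring
    · rw [sum_split_s19 hn hv0 hS _ 0 0
        (fun w hw => by have : w ≠ v0 := fun h => hv0 (h ▸ hw); simp [this, hw])
        (fun w h1 h2 => by simp [h1])]
      simp [hv0] <;> try ring
  rw [hE, hddef, prod_split hn hv0 hS x]
  have hident : (x - 2) * (x - ((n : ℝ) - 3)) * (x - ((n : ℝ) - 2)) ^ 3 *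
      Matrix.det !![1 - (a + ((n:ℝ)-4)*b + 3*c), a, ((n:ℝ)-4)*b;
         -(((n:ℝ)-4)*b), 1, ((n:ℝ)-4)*b;
         -a, a, 1]
      = (x - ((n : ℝ) - 2)) ^ 3 * (x ^ 2 - (2 * (n : ℝ) - 1) * x + (6 * (n : ℝ) - 18)) := by
    rw [Matrix.det_fin_three]
    try simp only [Matrix.of_apply, Matrix.cons_val', Matrix.cons_val_zero, Matrix.cons_val_one, Matrix.head_cons,
      Matrix.empty_val', Matrix.cons_val_fin_one, Matrix.head_fin_const, Matrix.cons_val_two,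
      Matrix.tail_cons]
    rw [hadef, hbdef, hcdef]
    field_simp
    ring
  have hpow : n - 4 = (n - 5) + 1 := by omega
  rw [hpow, pow_succ]
  linear_combination (x - ((n : ℝ) - 3)) ^ (n - 5) * hident

noncomputable def muM (n : ℕ) : ℝ :=
  (n : ℝ) - 1 / 2 - Real.sqrt (4 * n * ((n : ℝ) - 7) + 73) / 2

noncomputable def muP (n : ℕ) : ℝ :=
  (n : ℝ) - 1 / 2 + Real.sqrt (4 * n * ((n : ℝ) - 7) + 73) / 2

lemma mu_sum (n : ℕ) : muM n + muP n = 2 * (n : ℝ) - 1 := by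
  unfold muM muP; ring

lemma disc_nonneg (n : ℕ) : (0 : ℝ) ≤ 4 * n * ((n : ℝ) - 7) + 73 := by
  nlinarith [sq_nonneg (2 * (n : ℝ) - 7)]

lemma mu_prod (n : ℕ) : muM n * muP n = 6 * (n : ℝ) - 18 := by
  have h := Real.sq_sqrt (disc_nonneg n)
  unfold muM muP
  linear_combination (-(1 : ℝ)/4) * h

lemma quad_factor (n : ℕ) :
    (X : ℝ[X]) ^ 2 - C (2 * (n : ℝ) - 1) * X + C (6 * (n : ℝ) - 18)
      = (X - C (muM n)) * (X - C (muP n)) := by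
  rw [← mu_sum n, ← mu_prod n, C_add, C_mul]
  ring

lemma charpoly_kan (hn : 6 ≤ n) (hv0 : v0 ∉ S) (hS : S.card = n - 4) :
    (qMatrix (kan v0 S)).charpoly
      = (X - C ((n : ℝ) - 2)) ^ 3 * (X - C ((n : ℝ) - 3)) ^ (n - 5) *
        (X ^ 2 - C (2 * (n : ℝ) - 1) * X + C (6 * (n : ℝ) - 18)) := by
  apply Polynomial.eq_of_infinite_eval_eq
  apply Set.Infinite.mono ?_ (Set.Ioi_infinite (n : ℝ))
  intro x hx
  simp only [Set.mem_setOf_eq]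
  rw [eval_charpoly', det_eval hn hv0 hS x hx]
  simp [eval_mul, eval_pow, eval_sub, eval_add, eval_X, eval_C]

lemma roots_kan (hn : 6 ≤ n) (hv0 : v0 ∉ S) (hS : S.card = n - 4) :
    (qMatrix (kan v0 S)).charpoly.roots
      = (3 • {((n : ℝ) - 2)} + (n - 5) • {((n : ℝ) - 3)}) + ({muM n} + {muP n}) := by
  rw [charpoly_kan hn hv0 hS, quad_factor n]
  have hA : (X : ℝ[X]) - C ((n : ℝ) - 2) ≠ 0 := X_sub_C_ne_zero _
  have hB : (X : ℝ[X]) - C ((n : ℝ) - 3) ≠ 0 := X_sub_C_ne_zero _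
  have hm : (X : ℝ[X]) - C (muM n) ≠ 0 := X_sub_C_ne_zero _
  have hp : (X : ℝ[X]) - C (muP n) ≠ 0 := X_sub_C_ne_zero _
  rw [Polynomial.roots_mul (mul_ne_zero (mul_ne_zero (pow_ne_zero _ hA) (pow_ne_zero _ hB))
      (mul_ne_zero hm hp)),
    Polynomial.roots_mul (mul_ne_zero (pow_ne_zero _ hA) (pow_ne_zero _ hB)),
    Polynomial.roots_mul (mul_ne_zero hm hp),
    Polynomial.roots_pow, Polynomial.roots_pow, Polynomial.roots_X_sub_C,
    Polynomial.roots_X_sub_C, Polynomial.roots_X_sub_C, Polynomial.roots_X_sub_C]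

end Aux

theorem kan_signless_laplacian_eigenvalues {n : ℕ} (hn : 6 ≤ n)
    (v0 : Fin n) (S : Finset (Fin n)) (hv0 : v0 ∉ S) (hS : S.card = n - 4) :
    (∀ q ∈ (qMatrix (kan v0 S)).charpoly.roots, (2 : ℝ) ≤ q) ∧
      ((n : ℝ) - 1 / 2 - Real.sqrt (4 * n * ((n : ℝ) - 7) + 73) / 2) ∈
        (qMatrix (kan v0 S)).charpoly.roots ∧
      (∀ q ∈ (qMatrix (kan v0 S)).charpoly.roots,
        (n : ℝ) - 1 / 2 - Real.sqrt (4 * n * ((n : ℝ) - 7) + 73) / 2 ≤ q) ∧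
      2 ≤ (n : ℝ) - 1 / 2 - Real.sqrt (4 * n * ((n : ℝ) - 7) + 73) / 2 := by
  have hN6 : (6 : ℝ) ≤ (n : ℝ) := by exact_mod_cast hn
  have hroots := roots_kan hn hv0 hS
  set s : ℝ := Real.sqrt (4 * n * ((n : ℝ) - 7) + 73) with hsdef
  have hs0 : 0 ≤ s := Real.sqrt_nonneg _
  have hs5 : (5 : ℝ) ≤ s := by
    rw [hsdef, show (5 : ℝ) = Real.sqrt 25 by
      rw [show (25 : ℝ) = 5 ^ 2 by norm_num, Real.sqrt_sq (by norm_num : (0:ℝ) ≤ 5)]]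
    exact Real.sqrt_le_sqrt (by nlinarith)
  have hsub : s ≤ 2 * (n : ℝ) - 5 := by
    rw [hsdef]
    calc Real.sqrt (4 * n * ((n : ℝ) - 7) + 73) ≤ Real.sqrt ((2 * (n : ℝ) - 5) ^ 2) :=
          Real.sqrt_le_sqrt (by nlinarith)
      _ = 2 * (n : ℝ) - 5 := Real.sqrt_sq (by linarith)
  have hmu : (n : ℝ) - 1 / 2 - s / 2 = muM n := by rw [hsdef]; rfl
  have hmup : muP n = (n : ℝ) - 1 / 2 + s / 2 := by rw [hsdef]; rfl
  have h5 : n - 5 ≠ 0 := by omega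
  have hmem : ∀ q : ℝ, q ∈ (qMatrix (kan v0 S)).charpoly.roots ↔
      (q = (n : ℝ) - 2 ∨ q = (n : ℝ) - 3 ∨ q = muM n ∨ q = muP n) := by
    intro q
    rw [hroots]
    simp [Multiset.mem_add, Multiset.mem_nsmul, Multiset.mem_singleton, h5]
    tauto
  have hmuM2 : (2 : ℝ) ≤ muM n := by rw [← hmu]; linarith
  have hmuM3 : muM n ≤ (n : ℝ) - 3 := by rw [← hmu]; linarith
  have hmuMP : muM n ≤ muP n := by rw [← hmu, hmup]; linarith
  refine ⟨?_, ?_, ?_, ?_⟩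
  · intro q hq
    rcases (hmem q).1 hq with rfl | rfl | rfl | rfl
    · linarith
    · linarith
    · exact hmuM2
    · rw [hmup]; linarith
  · rw [hmu]
    exact (hmem _).2 (Or.inr (Or.inr (Or.inl rfl)))
  · intro q hq
    rw [hmu]
    rcases (hmem q).1 hq with rfl | rfl | rfl | rfl
    · linarith
    · exact hmuM3
    · exact le_refl _
    · exact hmuMP
  · rw [hmu]
    exact hmuM2
end
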